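/- If an element β of R − k is integral over k, then its orbit under Aut_k(R) is finite (being contained in the set of roots of its minimal polynomial over k); consequently if k is infinite and some α ∈ R − k is integral over k, then (R − k)/Aut_k(R) is infinite. -/
import Mathlib


theorem finite_orbit_of_integral_and_infinite_orbit_space
    (k R : Type*) [Field k] [Infinite k] [CommRing R] [IsDomain R] [Algebra k R]
    (hinj : Function.Injective (algebraMap k R)) :
    (∀ β : R, β ∉ Set.range (algebraMap k R) → IsIntegral k β →
      (Set.range fun σ : R ≃ₐ[k] R => σ β).Finite) ∧
    ((∃ α : R, α ∉ Set.range (algebraMap k R) ∧ IsIntegral k α) →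
      ¬ ∃ s : Finset R, ∀ x : R, x ∉ Set.range (algebraMap k R) →
        ∃ y ∈ s, ∃ σ : R ≃ₐ[k] R, σ y = x) := by
  have part1 : ∀ β : R, β ∉ Set.range (algebraMap k R) → IsIntegral k β →
      (Set.range fun σ : R ≃ₐ[k] R => σ β).Finite := by
    intro β _ hint
    have hne : minpoly k β ≠ 0 := minpoly.ne_zero hint
    refine Set.Finite.subset ((minpoly k β).rootSet_finite R) ?_
    rintro x ⟨σ, rfl⟩
    rw [Polynomial.mem_rootSet]
    refine ⟨hne, ?_⟩
    show Polynomial.aeval ((σ : R →ₐ[k] R) β) (minpoly k β) = 0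
    rw [Polynomial.aeval_algHom_apply (σ : R →ₐ[k] R) β, minpoly.aeval, map_zero]
  refine ⟨part1, ?_⟩
  rintro ⟨α, hα, hαint⟩ ⟨s, hs⟩
  -- the set T of α + c, c ∈ k, is infinite, consists of integral non-k elements
  set T : Set R := Set.range (fun c : k => α + algebraMap k R c) with hT
  have hTinf : T.Infinite := by
    apply Set.infinite_range_of_injective
    intro a b hab
    exact hinj (by simpa using add_left_cancel hab)
  have hTmem : ∀ x ∈ T, x ∉ Set.range (algebraMap k R) ∧ IsIntegral k x := by
    rintro x ⟨c, rfl⟩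
    dsimp only
    constructor
    · rintro ⟨d, hd⟩
      exact hα ⟨d - c, by rw [map_sub, hd]; ring⟩
    · exact hαint.add (isIntegral_algebraMap)
  -- T is covered by orbits of elements of s
  have hcover : T ⊆ ⋃ y ∈ s, (Set.range fun σ : R ≃ₐ[k] R => σ y) := by
    intro x hx
    obtain ⟨y, hy, σ, hσ⟩ := hs x (hTmem x hx).1
    exact Set.mem_biUnion hy ⟨σ, hσ⟩
  have hfin : (⋃ y ∈ s, ((Set.range fun σ : R ≃ₐ[k] R => σ y) ∩ T)).Finite := by
    refine Set.Finite.biUnion s.finite_toSet ?_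
    intro y _
    rcases Set.eq_empty_or_nonempty ((Set.range fun σ : R ≃ₐ[k] R => σ y) ∩ T) with h | h
    · rw [h]; exact Set.finite_empty
    · obtain ⟨x, ⟨σ, hσ⟩, hxT⟩ := h
      obtain ⟨hxk, hxint⟩ := hTmem x hxT
      have hy : y = σ.symm x := by rw [← hσ]; simp
      have hyint : IsIntegral k y := by
        rw [hy]; exact hxint.map (σ.symm : R →ₐ[k] R)
      have hyk : y ∉ Set.range (algebraMap k R) := by
        rintro ⟨c, rfl⟩
        exact hxk ⟨c, by rw [← hσ]; simp⟩
      exact (part1 y hyk hyint).inter_of_left T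
  have : T.Finite := by
    refine hfin.subset ?_
    intro x hx
    obtain ⟨y, hy, σ, hσ⟩ := hs x (hTmem x hx).1
    exact Set.mem_biUnion hy ⟨⟨σ, hσ⟩, hx⟩
  exact hTinf this
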